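/- arXiv:2306.11365 — 2 statements merged into one kernel-verified Lean document; each statement's English description precedes it below -/
import Mathlib

section
/- Let $X$ be a Banach space, $A$ a densely defined closed operator on $X$, $p \in [1,\infty]$, $r \ge 1$, and let $J_n = (t_{n-1},t_n)$ with $\tau_n = t_n - t_{n-1}$. Suppose $u_\tau \in \mathcal{P}^r(J_n; D(A))$ satisfies the local DG relation $\int_{J_n}\langle \partial_t u_\tau + A u_\tau,\varphi\rangle\,dt + \langle [u_\tau]^{n-1}, \varphi(t_{n-1}^+)\rangle = \int_{J_n}\langle f,\varphi\rangle\,dt$ for all $\varphi \in \mathcal{P}^r(J_n;X')$, where $[u_\tau]^{n-1} = u_\tau(t_{n-1}^+) - u_\tau^{n-1,-}$ for some given $u_\tau^{n-1,-} \in X$. Then $\big\|\tau_n^{-1}[u_\tau]^{n-1}\big\|_X\,\tau_n^{1/p} \le \|\partial_t u_\tau + A u_\tau - f\|_{L^p(J_n;X)}$. -/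
open MeasureTheory ENNReal

/-- A function is an `X`-valued polynomial of degree at most `r`. -/
def IsPolyDeg {X : Type*} [NormedAddCommGroup X] [NormedSpace ℝ X]
    (r : ℕ) (f : ℝ → X) : Prop :=
  ∃ c : Fin (r+1) → X, ∀ t : ℝ, f t = ∑ i : Fin (r+1), t ^ (i : ℕ) • c i

theorem stmt_12 {X : Type*} [NormedAddCommGroup X] [NormedSpace ℝ X] [CompleteSpace X]
    (r : ℕ) (hr : 1 ≤ r) (p : ℝ≥0∞) (hp : 1 ≤ p)
    (A : X →ₗ[ℝ] X) (a b : ℝ) (hab : a < b)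
    (u : ℝ → X) (hu : IsPolyDeg r u) (um : X)
    (f : ℝ → X) (hf : MemLp f p (volume.restrict (Set.Ioo a b)))
    (hDG : ∀ φ : ℝ → StrongDual ℝ X, IsPolyDeg r φ →
      (∫ t in a..b, φ t (deriv u t + A (u t))) + φ a (u a - um)
        = ∫ t in a..b, φ t (f t)) :
    ENNReal.ofReal (‖u a - um‖ / (b - a)) * ENNReal.ofReal (b - a) ^ p.toReal⁻¹
      ≤ eLpNorm (fun t => deriv u t + A (u t) - f t) p (volume.restrict (Set.Ioo a b)) := by
  obtain ⟨c, hc⟩ := hu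
  set x := u a - um with hxdef
  have hba : (0:ℝ) < b - a := by linarith
  set μ := volume.restrict (Set.Ioo a b) with hμ
  -- the polynomial q t = deriv u t + A (u t)
  set q : ℝ → X := fun t =>
      (∑ i : Fin (r+1), (((i:ℕ):ℝ) * t ^ ((i:ℕ) - 1)) • c i)
        + ∑ i : Fin (r+1), t ^ (i:ℕ) • A (c i) with hqdef
  have hueq : u = fun t => ∑ i : Fin (r+1), t ^ (i:ℕ) • c i := funext hc
  have hderiv : ∀ t : ℝ, deriv u t = ∑ i : Fin (r+1), (((i:ℕ):ℝ) * t ^ ((i:ℕ) - 1)) • c i := by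
    intro t
    have : HasDerivAt u (∑ i : Fin (r+1), (((i:ℕ):ℝ) * t ^ ((i:ℕ) - 1)) • c i) t := by
      rw [hueq]
      exact HasDerivAt.fun_sum fun (i : Fin (r+1)) _ => (hasDerivAt_pow (i:ℕ) t).smul_const (c i)
    exact this.deriv
  have hq : ∀ t : ℝ, deriv u t + A (u t) = q t := by
    intro t
    rw [hderiv t, hc t, map_sum, hqdef]
    simp [_root_.map_smul]
  have hqc : Continuous q := by
    apply Continuous.add <;>
      exact continuous_finset_sum _ fun i _ => Continuous.smul (by fun_prop) continuous_const
  -- measure facts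
  haveI : IsFiniteMeasure μ := by
    constructor
    rw [hμ, Measure.restrict_apply_univ, Real.volume_Ioo]
    exact ofReal_lt_top
  have hfint : Integrable f μ := hf.integrable hp
  have hqint : Integrable q μ :=
    (hqc.integrableOn_Icc.mono_set Set.Ioo_subset_Icc_self)
  have hfi : IntervalIntegrable f volume a b :=
    (intervalIntegrable_iff_integrableOn_Ioo_of_le hab.le).2 hfint
  have hqi : IntervalIntegrable q volume a b :=
    (intervalIntegrable_iff_integrableOn_Ioo_of_le hab.le).2 hqint
  -- reduce to nonzero case
  rcases eq_or_ne x (0 : X) with hx | hx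
  · rw [hx]
    simp
  -- norming functional
  obtain ⟨ψ, hψ1, hψx0⟩ := exists_dual_vector ℝ x (norm_ne_zero_iff.mpr hx)
  have hψx : ψ x = ‖x‖ := by exact_mod_cast hψx0
  have key := hDG (fun _ => ψ) ⟨fun i => if i = 0 then ψ else 0, by
    intro t
    rw [Finset.sum_eq_single (0 : Fin (r+1))]
    · simp
    · intro i _ hi; simp [hi]
    · simp⟩
  -- key : ∫ ψ (deriv u + A u) + ψ x = ∫ ψ f
  have hψfi : IntervalIntegrable (fun t => ψ (f t)) volume a b :=
    ⟨ψ.integrable_comp hfi.1, ψ.integrable_comp hfi.2⟩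
  have hψqi : IntervalIntegrable (fun t => ψ (q t)) volume a b :=
    ⟨ψ.integrable_comp hqi.1, ψ.integrable_comp hqi.2⟩
  have hkey2 : ψ x = ∫ t in a..b, ψ (f t - q t) := by
    have h1 : (∫ t in a..b, ψ (deriv u t + A (u t))) = ∫ t in a..b, ψ (q t) := by
      apply intervalIntegral.integral_congr
      intro t _
      simp only [hq]
    rw [h1] at key
    have := intervalIntegral.integral_sub hψfi hψqi
    simp only [← map_sub] at this
    rw [this]
    linarith
  have hnorm : ‖x‖ ≤ ∫ t in a..b, ‖q t - f t‖ := by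
    rw [← hψx, hkey2]
    have hint1 : IntervalIntegrable (fun t => ψ (f t - q t)) volume a b :=
      ⟨ψ.integrable_comp (hfi.1.sub hqi.1), ψ.integrable_comp (hfi.2.sub hqi.2)⟩
    have hint2 : IntervalIntegrable (fun t => ‖q t - f t‖) volume a b := (hqi.sub hfi).norm
    apply intervalIntegral.integral_mono_on hab.le hint1 hint2
    intro t _
    have h1 : ψ (f t - q t) ≤ ‖ψ (f t - q t)‖ := le_abs_self _
    have h2 : ‖ψ (f t - q t)‖ ≤ ‖ψ‖ * ‖f t - q t‖ := ψ.le_opNorm _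
    rw [hψ1, one_mul, norm_sub_rev] at h2
    linarith
  -- to Ioo integral
  have hIoo : (∫ t in a..b, ‖q t - f t‖) = ∫ t in Set.Ioo a b, ‖q t - f t‖ := by
    rw [intervalIntegral.integral_of_le hab.le, integral_Ioc_eq_integral_Ioo]
  -- ENNReal chain
  set G := fun t : ℝ => q t - f t with hGdef
  have hGeq : (fun t => deriv u t + A (u t) - f t) = G := by
    funext t; rw [hGdef]; simp [hq t]
  rw [hGeq]
  set N := eLpNorm G p μ with hN
  have hGint : Integrable G μ := hqint.sub hfint
  have chain1 : ENNReal.ofReal ‖x‖ ≤ eLpNorm G 1 μ := by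
    rw [eLpNorm_one_eq_lintegral_enorm, ← ofReal_integral_norm_eq_lintegral_enorm hGint]
    apply ENNReal.ofReal_le_ofReal
    rw [hIoo] at hnorm
    exact hnorm
  set s := p.toReal⁻¹ with hs
  set cE := ENNReal.ofReal (b - a) with hcE
  have hc0 : cE ≠ 0 := by rw [hcE]; exact (ENNReal.ofReal_pos.2 hba).ne'
  have hct : cE ≠ ⊤ := ofReal_ne_top
  have chain2 : eLpNorm G 1 μ ≤ N * cE ^ (1 - s) := by
    have := eLpNorm_le_eLpNorm_mul_rpow_measure_univ (μ := μ) (f := G) hp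
      (hGint.aestronglyMeasurable)
    have hμu : μ Set.univ = cE := by
      rw [hμ, Measure.restrict_apply_univ, Real.volume_Ioo, hcE]
    rw [hμu] at this
    simpa [hs] using this
  have H : ENNReal.ofReal ‖x‖ ≤ N * cE ^ (1 - s) := chain1.trans chain2
  have hdiv : ENNReal.ofReal (‖x‖ / (b - a)) = ENNReal.ofReal ‖x‖ * cE⁻¹ := by
    rw [ENNReal.ofReal_div_of_pos hba, div_eq_mul_inv, hcE]
  rw [hdiv]
  calc ENNReal.ofReal ‖x‖ * cE⁻¹ * cE ^ s
      ≤ N * cE ^ (1 - s) * cE⁻¹ * cE ^ s := by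
        gcongr
    _ = N * (cE ^ (1 - s) * cE ^ s * cE⁻¹) := by ring
    _ = N := by
        rw [← ENNReal.rpow_add _ _ hc0 hct]
        norm_num
        rw [ENNReal.mul_inv_cancel hc0 hct, mul_one]
end

section
/- Let $X$ be a Banach space, $A$ a densely defined closed operator on $X$, $p \in [1,\infty]$, $r \ge 1$. With the local DG relation as above on $J_n = (t_{n-1},t_n)$, one has $\|\partial_t u_\tau\|_{L^p(J_n;X)} \le C\,\|A u_\tau - f\|_{L^p(J_n;X)}$, where $C$ depends only on $r$ and $p$ (not on $\tau_n$, $n$, or $u_\tau$). -/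
open MeasureTheory ENNReal

open Polynomial

noncomputable def Hmat (r : ℕ) : Matrix (Fin r) (Fin r) ℝ :=
  Matrix.of fun j k => ((j : ℝ) + (k : ℝ) + 2)⁻¹

lemma hankel_isUnit (r : ℕ) : IsUnit (Hmat r).det := by
  rw [isUnit_iff_ne_zero]
  intro hdet
  obtain ⟨v, hv0, hv⟩ := Matrix.exists_mulVec_eq_zero_iff.2 hdet
  set P : Polynomial ℝ := ∑ k : Fin r, Polynomial.C (v k) * Polynomial.X ^ (k : ℕ) with hP
  have hPeval : ∀ s : ℝ, P.eval s = ∑ k : Fin r, v k * s ^ (k : ℕ) := by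
    intro s; simp [hP, Polynomial.eval_finset_sum]
  have h2 : ∀ j : Fin r, (∫ s in (0:ℝ)..1, s ^ ((j:ℕ)+1) * P.eval s) = 0 := by
    intro j
    have : ∀ s : ℝ, s ^ ((j:ℕ)+1) * P.eval s
        = ∑ k : Fin r, v k * s ^ ((j:ℕ)+1+(k:ℕ)) := by
      intro s; rw [hPeval, Finset.mul_sum]
      refine Finset.sum_congr rfl fun k _ => by ring
    rw [intervalIntegral.integral_congr (g := fun s => ∑ k : Fin r, v k * s ^ ((j:ℕ)+1+(k:ℕ)))
      (fun s _ => this s)]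
    rw [intervalIntegral.integral_finset_sum]
    · have : ∀ k : Fin r, (∫ s in (0:ℝ)..1, v k * s ^ ((j:ℕ)+1+(k:ℕ)))
          = v k * ((j:ℝ) + (k:ℝ) + 2)⁻¹ := by
        intro k
        rw [intervalIntegral.integral_const_mul, integral_pow]
        norm_num
        left
        push_cast
        ring
      rw [Finset.sum_congr rfl fun k _ => this k]
      have := congrFun hv j
      simpa [Matrix.mulVec, dotProduct, Hmat, mul_comm] using this
    · intro k _
      exact (Continuous.intervalIntegrable (by continuity) _ _)
  -- the quadratic moment vanishes
  have h3 : (∫ s in (0:ℝ)..1, s * P.eval s ^ 2) = 0 := by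
    have : ∀ s : ℝ, s * P.eval s ^ 2 = ∑ j : Fin r, v j * (s ^ ((j:ℕ)+1) * P.eval s) := by
      intro s
      rw [hPeval s, sq, Finset.sum_mul, Finset.mul_sum]
      refine Finset.sum_congr rfl fun j _ => by ring
    rw [intervalIntegral.integral_congr (g := fun s => ∑ j : Fin r, v j * (s ^ ((j:ℕ)+1) * P.eval s)) (fun s _ => this s)]
    rw [intervalIntegral.integral_finset_sum]
    · refine Finset.sum_eq_zero fun j _ => ?_
      rw [intervalIntegral.integral_const_mul, h2 j, mul_zero]
    · intro j _
      exact (Continuous.intervalIntegrable (by continuity) _ _)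
  -- hence P = 0
  have hcont : Continuous fun s : ℝ => s * P.eval s ^ 2 := by continuity
  have hae : (fun s : ℝ => s * P.eval s ^ 2) =ᵐ[volume.restrict (Set.Ioc (0:ℝ) 1)] 0 := by
    have h0le : (0:ℝ) ≤ 1 := zero_le_one
    rw [intervalIntegral.integral_of_le h0le] at h3
    refine (integral_eq_zero_iff_of_nonneg_ae ?_ ?_).1 h3
    · filter_upwards [ae_restrict_mem measurableSet_Ioc] with s hs
      have : 0 ≤ s := le_of_lt hs.1
      positivity
    · exact (hcont.integrableOn_Icc (a := 0) (b := 1)).mono_set Set.Ioc_subset_Icc_self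
  have hPzero : P = 0 := by
    by_contra hPne
    have hroots : Set.Finite {s : ℝ | P.IsRoot s} := Polynomial.finite_setOf_isRoot hPne
    have hnull : volume ({s : ℝ | s * P.eval s ^ 2 ≠ 0} ∩ Set.Ioc (0:ℝ) 1) = 0 := by
      have := ae_iff.1 hae
      rw [Measure.restrict_apply₀' measurableSet_Ioc.nullMeasurableSet] at this
      simpa [Set.inter_comm] using this
    have hsub : Set.Ioc (0:ℝ) 1 ⊆
        ({s : ℝ | s * P.eval s ^ 2 ≠ 0} ∩ Set.Ioc (0:ℝ) 1) ∪ {s : ℝ | P.IsRoot s} := by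
      intro s hs
      by_cases hPs : P.eval s = 0
      · exact Or.inr hPs
      · left
        refine ⟨?_, hs⟩
        have h1 : 0 < s := hs.1
        have h2' : 0 < P.eval s ^ 2 :=
          lt_of_le_of_ne (sq_nonneg _) (Ne.symm (pow_ne_zero 2 hPs))
        exact ne_of_gt (mul_pos h1 h2')
    have : volume (Set.Ioc (0:ℝ) 1) = 0 := by
      refine le_antisymm ?_ (zero_le)
      calc volume (Set.Ioc (0:ℝ) 1)
          ≤ volume (({s : ℝ | s * P.eval s ^ 2 ≠ 0} ∩ Set.Ioc (0:ℝ) 1) ∪ {s : ℝ | P.IsRoot s}) :=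
            measure_mono hsub
        _ ≤ volume ({s : ℝ | s * P.eval s ^ 2 ≠ 0} ∩ Set.Ioc (0:ℝ) 1)
              + volume {s : ℝ | P.IsRoot s} := measure_union_le _ _
        _ = 0 := by rw [hnull, hroots.measure_zero, add_zero]
    simp [Real.volume_Ioc] at this
  apply hv0
  funext k
  have : P.coeff (k:ℕ) = v k := by
    rw [hP, Polynomial.finset_sum_coeff]
    rw [Finset.sum_eq_single k]
    · simp
    · intro k' _ hk'
      simp only [Polynomial.coeff_C_mul, Polynomial.coeff_X_pow]
      rw [if_neg (fun h => hk' (Fin.ext h.symm)), mul_zero]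
    · intro h; exact absurd (Finset.mem_univ k) h
  rw [hPzero] at this
  simpa using this.symm

lemma inv_combo {X : Type} [NormedAddCommGroup X] [NormedSpace ℝ X]
    {r : ℕ} (H : Matrix (Fin r) (Fin r) ℝ) (hH : IsUnit H.det)
    (e m : Fin r → X) (hm : ∀ j, m j = ∑ k, H j k • e k) (k : Fin r) :
    e k = ∑ j, H⁻¹ k j • m j := by
  have h1 : H⁻¹ * H = 1 := Matrix.nonsing_inv_mul H hH
  have : ∑ j, H⁻¹ k j • m j = ∑ l, ((H⁻¹ * H) k l) • e l := by
    calc ∑ j, H⁻¹ k j • m j = ∑ j, ∑ l, (H⁻¹ k j * H j l) • e l := by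
          refine Finset.sum_congr rfl fun j _ => ?_
          rw [hm j, Finset.smul_sum]
          exact Finset.sum_congr rfl fun l _ => (mul_smul _ _ _).symm
      _ = ∑ l, ∑ j, (H⁻¹ k j * H j l) • e l := Finset.sum_comm
      _ = ∑ l, ((H⁻¹ * H) k l) • e l := by
          refine Finset.sum_congr rfl fun l _ => ?_
          rw [← Finset.sum_smul]; rfl
  rw [this, h1]
  simp [Matrix.one_apply]

lemma expand_affine_pow (α β : ℝ) (k n : ℕ) (hk : k < n) (s : ℝ) :
    (α * s + β) ^ k
      = ∑ m : Fin n, s ^ (m:ℕ) * (α ^ (m:ℕ) * β ^ (k - (m:ℕ)) * (k.choose (m:ℕ))) := by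
  rw [add_pow]
  rw [Fin.sum_univ_eq_sum_range (fun m => s ^ m * (α ^ m * β ^ (k - m) * (k.choose m)))]
  rw [← Finset.sum_subset (Finset.range_subset_range.2 hk)]
  · exact Finset.sum_congr rfl fun m _ => by rw [mul_pow]; ring
  · intro m _ hm
    rw [Nat.choose_eq_zero_of_lt (by simpa using hm)]
    simp

theorem stmt_13 (r : ℕ) (hr : 1 ≤ r) (p : ℝ≥0∞) (hp : 1 ≤ p) :
    ∃ C : ℝ, 0 < C ∧
      ∀ (X : Type) (_ : NormedAddCommGroup X) (_ : NormedSpace ℝ X) (_ : CompleteSpace X)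
        (A : X →ₗ[ℝ] X) (a b : ℝ), a < b →
      ∀ (u : ℝ → X), IsPolyDeg r u →
      ∀ (um : X) (f : ℝ → X), MemLp f p (volume.restrict (Set.Ioo a b)) →
      (∀ φ : ℝ → StrongDual ℝ X, IsPolyDeg r φ →
        (∫ t in a..b, φ t (deriv u t + A (u t))) + φ a (u a - um)
          = ∫ t in a..b, φ t (f t)) →
      eLpNorm (fun t => deriv u t) p (volume.restrict (Set.Ioo a b))
        ≤ ENNReal.ofReal C *
            eLpNorm (fun t => A (u t) - f t) p (volume.restrict (Set.Ioo a b)) := by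
  classical
  set K : ℝ := ∑ k : Fin r, ∑ j : Fin r, |(Hmat r)⁻¹ k j| with hK
  have hK0 : 0 ≤ K := Finset.sum_nonneg fun k _ => Finset.sum_nonneg fun j _ => abs_nonneg _
  refine ⟨K + 1, by linarith, ?_⟩
  intro X _ _ _ A a b hab u hu um f hf hrel
  set μ : Measure ℝ := volume.restrict (Set.Ioo a b) with hμ
  set τ : ℝ := b - a with hτdef
  have hτ : 0 < τ := sub_pos.2 hab
  haveI hfin : IsFiniteMeasure μ := by
    constructor
    rw [hμ, Measure.restrict_apply_univ, Real.volume_Ioo]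
    exact ofReal_lt_top
  obtain ⟨c, hc⟩ := hu
  have hufun : u = fun t => ∑ i : Fin (r+1), t ^ (i : ℕ) • c i := funext hc
  -- the derivative
  set D : ℝ → X := fun t => ∑ i : Fin (r+1), (((i:ℕ):ℝ) * t ^ ((i:ℕ)-1)) • c i with hDdef
  have hD : ∀ t, HasDerivAt u (D t) t := by
    intro t
    rw [hufun]
    exact HasDerivAt.fun_sum fun i _ => (hasDerivAt_pow (i:ℕ) t).smul_const (c i)
  have hderiv : ∀ t, deriv u t = D t := fun t => (hD t).deriv
  have hDcont : Continuous D := by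
    rw [hDdef]
    exact continuous_finset_sum _ fun i _ =>
      (continuous_const.mul (continuous_pow _)).smul continuous_const
  -- A ∘ u is a polynomial, hence continuous
  have hAu : ∀ t, A (u t) = ∑ i : Fin (r+1), t ^ (i : ℕ) • A (c i) := by
    intro t
    rw [hc t, map_sum]
    exact Finset.sum_congr rfl fun i _ => A.map_smul _ _
  have hAucont : Continuous fun t => A (u t) := by
    rw [funext hAu]
    exact continuous_finset_sum _ fun i _ => (continuous_pow _).smul continuous_const
  -- representation of D in the monomial basis of degree < r
  set d : Fin r → X := fun k => (((k:ℕ):ℝ) + 1) • c k.succ with hddef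
  have hD2 : ∀ t, D t = ∑ k : Fin r, t ^ (k:ℕ) • d k := by
    intro t
    rw [hDdef]
    simp only []
    rw [Fin.sum_univ_succ]
    simp only [Fin.val_zero, Nat.cast_zero, zero_mul, zero_smul, zero_add]
    refine Finset.sum_congr rfl fun k _ => ?_
    rw [hddef]
    simp only [Fin.val_succ]
    rw [smul_smul]
    congr 1
    push_cast
    ring_nf
  -- representation of D in the B basis
  set B : ℝ → ℝ := fun t => (t - a) / τ with hBdef
  set e : Fin r → X :=
    fun m => ∑ k : Fin r, (τ ^ (m:ℕ) * a ^ ((k:ℕ) - (m:ℕ)) * ((k:ℕ).choose (m:ℕ))) • d k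
    with hedef
  have hDB : ∀ t, D t = ∑ m : Fin r, B t ^ (m:ℕ) • e m := by
    intro t
    rw [hD2 t]
    have ht : ∀ k : Fin r, t ^ (k:ℕ)
        = ∑ m : Fin r, B t ^ (m:ℕ) * (τ ^ (m:ℕ) * a ^ ((k:ℕ)-(m:ℕ)) * ((k:ℕ).choose (m:ℕ))) := by
      intro k
      have : t = τ * B t + a := by
        rw [hBdef]; field_simp; ring
      conv_lhs => rw [this]
      exact expand_affine_pow τ a (k:ℕ) r k.isLt (B t)
    calc ∑ k : Fin r, t ^ (k:ℕ) • d k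
        = ∑ k : Fin r, ∑ m : Fin r,
            (B t ^ (m:ℕ) * (τ ^ (m:ℕ) * a ^ ((k:ℕ)-(m:ℕ)) * ((k:ℕ).choose (m:ℕ)))) • d k := by
          refine Finset.sum_congr rfl fun k _ => ?_
          rw [ht k, Finset.sum_smul]
      _ = ∑ m : Fin r, B t ^ (m:ℕ) • e m := by
          rw [Finset.sum_comm]
          refine Finset.sum_congr rfl fun m _ => ?_
          rw [hedef]
          simp only []
          rw [Finset.smul_sum]
          exact Finset.sum_congr rfl fun k _ => by rw [mul_smul]
  -- the defect
  set g : ℝ → X := fun t => A (u t) - f t with hgdef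
  have hfint : Integrable f μ := hf.integrable hp
  have hBcont : Continuous B := by
    rw [hBdef]; exact (continuous_id.sub continuous_const).div_const τ
  have hIoo : ∀ {Y : Type} [NormedAddCommGroup Y] [NormedSpace ℝ Y], ∀ {h : ℝ → Y},
      Continuous h → Integrable h μ := by
    intro Y _ _ h hcont
    rw [hμ]
    exact (hcont.integrableOn_Icc (a := a) (b := b)).mono_set Set.Ioo_subset_Icc_self
  have hgint : Integrable g μ := by
    rw [hgdef]; exact (hIoo hAucont).sub hfint
  have hB01 : ∀ t ∈ Set.Ioo a b, 0 ≤ B t ∧ B t ≤ 1 := by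
    intro t ht
    rw [hBdef]
    constructor
    · exact div_nonneg (by linarith [ht.1]) hτ.le
    · rw [div_le_one hτ]
      have := ht.2
      rw [hτdef]; linarith
  have hBmem : ∀ᵐ t ∂μ, t ∈ Set.Ioo a b := by
    rw [hμ]; exact ae_restrict_mem measurableSet_Ioo
  have hBbdd : ∀ n : ℕ, ∀ᵐ t ∂μ, ‖B t ^ n‖ ≤ 1 := by
    intro n
    filter_upwards [hBmem] with t ht
    rw [Real.norm_eq_abs, abs_pow, abs_of_nonneg (hB01 t ht).1]
    exact pow_le_one₀ (hB01 t ht).1 (hB01 t ht).2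
  have hψfint : ∀ n : ℕ, Integrable (fun t => B t ^ n • f t) μ := by
    intro n
    refine Integrable.mono' hfint.norm
      (((hBcont.pow n).aestronglyMeasurable).smul hfint.aestronglyMeasurable) ?_
    filter_upwards [hBbdd n] with t ht
    rw [norm_smul]
    exact mul_le_of_le_one_left (norm_nonneg _) ht
  have hψDgint : ∀ n : ℕ, Integrable (fun t => B t ^ n • (D t + g t)) μ := by
    intro n
    have h1 : Integrable (fun t => B t ^ n • (D t + A (u t))) μ :=
      hIoo (((hBcont.pow n)).smul (hDcont.add hAucont))
    have : (fun t => B t ^ n • (D t + g t))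
        = fun t => B t ^ n • (D t + A (u t)) - B t ^ n • f t := by
      funext t
      rw [hgdef, ← smul_sub]
      congr 1
      abel
    rw [this]
    exact h1.sub (hψfint n)
  -- the weak moment equations
  have hmom : ∀ j : Fin r, (∫ t, B t ^ ((j:ℕ)+1) • (D t + g t) ∂μ) = 0 := by
    intro j
    set n : ℕ := (j:ℕ)+1 with hn
    have hnr : n ≤ r := j.isLt
    apply NormedSpace.eq_zero_of_forall_dual_eq_zero ℝ
    intro x'
    -- the test function
    have hφ : IsPolyDeg r (fun t => B t ^ n • x') := by
      refine ⟨fun i => (τ⁻¹ ^ (i:ℕ) * (-(a/τ)) ^ (n-(i:ℕ)) * (n.choose (i:ℕ))) • x',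
        fun t => ?_⟩
      show B t ^ n • x' = _
      have hB' : B t = τ⁻¹ * t + (-(a/τ)) := by
        rw [hBdef]; ring
      rw [hB', expand_affine_pow τ⁻¹ (-(a/τ)) n (r+1) (Nat.lt_succ_of_le hnr) t,
        Finset.sum_smul]
      exact Finset.sum_congr rfl fun i _ => (smul_smul _ _ _).symm
    have hrel' := hrel _ hφ
    have hBa : B a ^ n • x' = (0 : StrongDual ℝ X) := by
      have : B a = 0 := by rw [hBdef]; simp
      rw [this, zero_pow (by omega), zero_smul]
    rw [hBa] at hrel'
    simp only [ContinuousLinearMap.zero_apply, add_zero] at hrel'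
    rw [intervalIntegral.integral_of_le hab.le, intervalIntegral.integral_of_le hab.le,
      integral_Ioc_eq_integral_Ioo, integral_Ioc_eq_integral_Ioo] at hrel'
    simp only [ContinuousLinearMap.smul_apply, smul_eq_mul, hderiv] at hrel'
    -- move x' inside the integral
    rw [← ContinuousLinearMap.integral_comp_comm x' (hψDgint n)]
    have hint1 : Integrable (fun t => B t ^ n * x' (D t + A (u t))) μ :=
      hIoo ((hBcont.pow n).mul (x'.continuous.comp (hDcont.add hAucont)))
    have hint2 : Integrable (fun t => B t ^ n * x' (f t)) μ :=
      Integrable.bdd_mul (x'.integrable_comp hfint)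
        ((hBcont.pow n).aestronglyMeasurable) (hBbdd n)
    have heq : (fun t => x' (B t ^ n • (D t + g t)))
        = fun t => B t ^ n * x' (D t + A (u t)) - B t ^ n * x' (f t) := by
      funext t
      rw [hgdef]
      simp only []
      rw [x'.map_smul, smul_eq_mul, ← mul_sub]
      congr 1
      have h9 : D t + (A (u t) - f t) = (D t + A (u t)) - f t := by abel
      rw [h9, x'.map_sub]
    rw [heq, integral_sub hint1 hint2, sub_eq_zero]
    exact hrel'
  -- scalar moments of the basis functions
  have hBint : ∀ n : ℕ, (∫ t, B t ^ n ∂μ) = τ / (n+1) := by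
    intro n
    rw [hμ, ← integral_Ioc_eq_integral_Ioo, ← intervalIntegral.integral_of_le hab.le]
    have hc1 : ∀ t ∈ Set.uIcc a b, B t ^ n = (τ⁻¹) ^ n * (t - a) ^ n := by
      intro t _
      rw [hBdef]
      simp only []
      rw [div_pow, div_eq_mul_inv, inv_pow, mul_comm]
    rw [intervalIntegral.integral_congr hc1, intervalIntegral.integral_const_mul,
      intervalIntegral.integral_comp_sub_right (fun x : ℝ => x ^ n) a, sub_self,
      integral_pow, zero_pow (Nat.succ_ne_zero n)]
    rw [hτdef]
    have hne : (b - a) ≠ 0 := ne_of_gt (sub_pos.2 hab)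
    rw [inv_pow, pow_succ]
    field_simp
    rw [sub_zero]
  -- vector moments of D
  have hMD : ∀ j : Fin r, (∫ t, B t ^ ((j:ℕ)+1) • D t ∂μ)
      = ∑ k : Fin r, (τ * Hmat r j k) • e k := by
    intro j
    have h1 : (fun t => B t ^ ((j:ℕ)+1) • D t)
        = fun t => ∑ m : Fin r, B t ^ ((j:ℕ)+1+(m:ℕ)) • e m := by
      funext t
      rw [hDB t, Finset.smul_sum]
      exact Finset.sum_congr rfl fun m _ => by rw [smul_smul, ← pow_add]
    rw [h1, integral_finset_sum _ (fun (m : Fin r) _ => (hIoo ((hBcont.pow _).smul continuous_const) : Integrable (fun t => B t ^ ((j:ℕ)+1+(m:ℕ)) • e m) μ))]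
    refine Finset.sum_congr rfl fun m _ => ?_
    rw [integral_smul_const, hBint]
    congr 1
    rw [Hmat]
    simp only [Matrix.of_apply]
    rw [div_eq_mul_inv]
    congr 1
    push_cast
    ring
  -- integrability of the weighted g and D
  have hψgint : ∀ n : ℕ, Integrable (fun t => B t ^ n • g t) μ := by
    intro n
    have : (fun t => B t ^ n • g t)
        = fun t => B t ^ n • A (u t) - B t ^ n • f t := by
      funext t; rw [hgdef]; simp only []; rw [smul_sub]
    rw [this]
    exact (hIoo ((hBcont.pow n).smul hAucont)).sub (hψfint n)
  have hψDint : ∀ n : ℕ, Integrable (fun t => B t ^ n • D t) μ :=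
    fun n => hIoo ((hBcont.pow n).smul hDcont)
  have hsplit : ∀ j : Fin r, (∫ t, B t ^ ((j:ℕ)+1) • D t ∂μ)
      = - ∫ t, B t ^ ((j:ℕ)+1) • g t ∂μ := by
    intro j
    have h2 := hmom j
    have h3 : (fun t => B t ^ ((j:ℕ)+1) • (D t + g t))
        = fun t => B t ^ ((j:ℕ)+1) • D t + B t ^ ((j:ℕ)+1) • g t := by
      funext t; rw [smul_add]
    rw [h3, integral_add (hψDint _) (hψgint _)] at h2
    exact eq_neg_of_add_eq_zero_left h2
  -- the norm of the g moments
  set G : ℝ := ∫ t, ‖g t‖ ∂μ with hG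
  have hG0 : 0 ≤ G := integral_nonneg fun t => norm_nonneg _
  have hmg : ∀ j : Fin r, ‖∫ t, B t ^ ((j:ℕ)+1) • g t ∂μ‖ ≤ G := by
    intro j
    refine (norm_integral_le_integral_norm _).trans ?_
    refine integral_mono_ae (hψgint _).norm hgint.norm ?_
    filter_upwards [hBbdd ((j:ℕ)+1)] with t ht
    rw [norm_smul]
    exact mul_le_of_le_one_left (norm_nonneg _) ht
  -- invert the moment matrix
  set mv : Fin r → X := fun j => τ⁻¹ • ∫ t, B t ^ ((j:ℕ)+1) • D t ∂μ with hmv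
  have hminv : ∀ j, mv j = ∑ k, Hmat r j k • e k := by
    intro j
    rw [hmv]
    simp only []
    rw [hMD j, Finset.smul_sum]
    refine Finset.sum_congr rfl fun k _ => ?_
    rw [smul_smul, ← mul_assoc, inv_mul_cancel₀ (ne_of_gt hτ), one_mul]
  have hek : ∀ k, e k = ∑ j, (Hmat r)⁻¹ k j • mv j :=
    fun k => inv_combo _ (hankel_isUnit r) e mv hminv k
  have hmnorm : ∀ j, ‖mv j‖ ≤ τ⁻¹ * G := by
    intro j
    rw [hmv]
    simp only []
    rw [norm_smul, Real.norm_eq_abs, abs_of_pos (inv_pos.2 hτ)]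
    refine mul_le_mul_of_nonneg_left ?_ (inv_pos.2 hτ).le
    rw [hsplit j, norm_neg]
    exact hmg j
  have heknorm : ∀ k, ‖e k‖ ≤ (∑ j, |(Hmat r)⁻¹ k j|) * (τ⁻¹ * G) := by
    intro k
    rw [hek k]
    refine (norm_sum_le _ _).trans ?_
    rw [Finset.sum_mul]
    refine Finset.sum_le_sum fun j _ => ?_
    rw [norm_smul, Real.norm_eq_abs]
    exact mul_le_mul_of_nonneg_left (hmnorm j) (abs_nonneg _)
  -- pointwise bound for D on Ioo
  have hDbd : ∀ t ∈ Set.Ioo a b, ‖D t‖ ≤ K * (τ⁻¹ * G) := by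
    intro t ht
    rw [hDB t]
    refine (norm_sum_le _ _).trans ?_
    rw [hK, Finset.sum_mul]
    refine Finset.sum_le_sum fun k _ => ?_
    rw [norm_smul, Real.norm_eq_abs, abs_pow, abs_of_nonneg (hB01 t ht).1]
    calc B t ^ (k:ℕ) * ‖e k‖
        ≤ 1 * ‖e k‖ :=
          mul_le_mul_of_nonneg_right (pow_le_one₀ (hB01 t ht).1 (hB01 t ht).2) (norm_nonneg _)
      _ = ‖e k‖ := one_mul _
      _ ≤ (∑ j, |(Hmat r)⁻¹ k j|) * (τ⁻¹ * G) := heknorm k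
  -- conclude
  have hμuniv : μ Set.univ = ENNReal.ofReal τ := by
    rw [hμ, Measure.restrict_apply_univ, Real.volume_Ioo, hτdef]
  set T : ℝ≥0∞ := ENNReal.ofReal τ with hT
  have hT0 : T ≠ 0 := by
    rw [hT, ← pos_iff_ne_zero]
    exact ENNReal.ofReal_pos.2 hτ
  have hTtop : T ≠ ∞ := ofReal_ne_top
  have step1 : eLpNorm (fun t => deriv u t) p μ = eLpNorm D p μ :=
    eLpNorm_congr_ae (Filter.EventuallyEq.of_eq (funext hderiv))
  have step2 : eLpNorm D p μ ≤ T ^ p.toReal⁻¹ * ENNReal.ofReal (K * (τ⁻¹ * G)) := by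
    have hae : ∀ᵐ t ∂μ, ‖D t‖ ≤ K * (τ⁻¹ * G) := by
      filter_upwards [hBmem] with t ht
      exact hDbd t ht
    have h5 := eLpNorm_le_of_ae_bound (p := p) hae
    rwa [hμuniv] at h5
  have step3 : ENNReal.ofReal G = eLpNorm g 1 μ := by
    rw [eLpNorm_one_eq_lintegral_enorm, hG]
    exact ofReal_integral_norm_eq_lintegral_enorm hgint
  have step4 : eLpNorm g 1 μ
      ≤ eLpNorm g p μ * T ^ (1 / (1:ℝ≥0∞).toReal - 1 / p.toReal) := by
    have h6 := eLpNorm_le_eLpNorm_mul_rpow_measure_univ hp hgint.aestronglyMeasurable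
    rwa [hμuniv] at h6
  rw [step1]
  refine step2.trans ?_
  calc T ^ p.toReal⁻¹ * ENNReal.ofReal (K * (τ⁻¹ * G))
      = T ^ p.toReal⁻¹ * (ENNReal.ofReal K * (T⁻¹ * ENNReal.ofReal G)) := by
        rw [ENNReal.ofReal_mul hK0, ENNReal.ofReal_mul (inv_pos.2 hτ).le,
          ENNReal.ofReal_inv_of_pos hτ]
    _ ≤ T ^ p.toReal⁻¹ * (ENNReal.ofReal K * (T⁻¹ *
          (eLpNorm g p μ * T ^ (1 / (1:ℝ≥0∞).toReal - 1 / p.toReal)))) :=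
        mul_le_mul_right (mul_le_mul_right (mul_le_mul_right (step3 ▸ step4) _) _) _
    _ = (T ^ p.toReal⁻¹ * T ^ (-1:ℝ) * T ^ (1 / (1:ℝ≥0∞).toReal - 1 / p.toReal))
          * (ENNReal.ofReal K * eLpNorm g p μ) := by
        rw [ENNReal.rpow_neg_one]
        ring
    _ = ENNReal.ofReal K * eLpNorm g p μ := by
        rw [← ENNReal.rpow_add _ _ hT0 hTtop, ← ENNReal.rpow_add _ _ hT0 hTtop]
        have hexp : p.toReal⁻¹ + -1 + (1 / (1:ℝ≥0∞).toReal - 1 / p.toReal) = 0 := by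
          simp only [ENNReal.toReal_one, one_div]
          ring
        rw [hexp, ENNReal.rpow_zero, one_mul]
    _ ≤ ENNReal.ofReal (K + 1) * eLpNorm g p μ :=
        mul_le_mul_left (ENNReal.ofReal_le_ofReal (by linarith)) _
end
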